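/- Let p ∈ (1,∞) and δ ≥ 0 with (δ, |A|) ≠ (0, 0), let φ = φ_{p,δ}, and let F(P) = (δ + |P^sym|)^{(p-2)/2} P^sym. Then there exist constants c, C > 0 depending only on p such that for every symmetric A ∈ ℝ^{3×3}_sym (A ≠ 0 if δ = 0) and every symmetric B ∈ ℝ^{3×3}_sym: c·φ''(|A|)·|B|² ≤ |DF(A)[B]|² ≤ C·φ''(|A|)·|B|², where DF(A)[B] denotes the directional derivative of F at A in direction B. In particular, for a differentiable symmetric tensor field Q on an open set Ω ⊂ ℝ³ this gives |∂_i F(Q(x))|² ~ φ''(|Q(x)|)|∂_i Q(x)|² for i = 1,2,3. -/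

import Mathlib

noncomputable section

open Matrix

attribute [local instance] Matrix.normedAddCommGroup Matrix.normedSpace

/-- 3×3 real matrices. -/
abbrev Mat3 := Matrix (Fin 3) (Fin 3) ℝ

/-- The symmetric part `P^sym = (P + Pᵀ)/2` of a matrix. -/
def msym (P : Mat3) : Mat3 := (1 / 2 : ℝ) • (P + Pᵀ)

/-- The scalar product of tensors `A·B = Σ_{i,j} A_{ij} B_{ij}`. -/
def mdot (A B : Mat3) : ℝ := ∑ i, ∑ j, A i j * B i j

/-- The Euclidean (Frobenius) norm `|A| = √(A·A)`. -/
def mnorm (A : Mat3) : ℝ := Real.sqrt (mdot A A)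

/-- The N-function `φ_{p,δ}(t) = ∫₀ᵗ (δ+s)^{p-2} s ds`. -/
def phi (p δ t : ℝ) : ℝ := ∫ s in (0:ℝ)..t, (δ + s) ^ (p - 2) * s

/-- Its first derivative `φ'(t) = (δ+t)^{p-2} t`. -/
def phi' (p δ t : ℝ) : ℝ := (δ + t) ^ (p - 2) * t

/-- Its second derivative `φ''(t) = (p-2)(δ+t)^{p-3} t + (δ+t)^{p-2}` (for `t > 0`). -/
def phi'' (p δ t : ℝ) : ℝ := (p - 2) * (δ + t) ^ (p - 3) * t + (δ + t) ^ (p - 2)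

/-- The partial derivative `∂_{kl} S_{ij}(P)` of the `(i,j)` component of `S`
with respect to the `(k,l)` matrix entry. -/
def DS (S : Mat3 → Mat3) (P : Mat3) (k l i j : Fin 3) : ℝ :=
  fderiv ℝ S P (Matrix.single k l 1) i j

/-- A tensor field `S` has `(p,δ)`-structure with characteristics `(κ₀, κ₁, p)`. -/
structure PDelta (p δ κ₀ κ₁ : ℝ) (S : Mat3 → Mat3) : Prop where
  cont : Continuous S
  smooth : ContDiffOn ℝ 1 S {(0 : Mat3)}ᶜ
  symval : ∀ P, (S P)ᵀ = S P
  symdep : ∀ P, S P = S (msym P)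
  zero : S 0 = 0
  lower : ∀ P Q : Mat3, msym P ≠ 0 →
    κ₀ * phi'' p δ (mnorm (msym P)) * (mnorm (msym Q)) ^ 2 ≤
      ∑ i, ∑ j, ∑ k, ∑ l, DS S P k l i j * Q i j * Q k l
  upper : ∀ P : Mat3, msym P ≠ 0 → ∀ i j k l : Fin 3,
    |DS S P k l i j| ≤ κ₁ * phi'' p δ (mnorm (msym P))

/-- The tensor field `F(P) = (δ + |P^sym|)^{(p-2)/2} P^sym` associated to `S`. -/
def Fassoc (p δ : ℝ) (P : Mat3) : Mat3 :=
  (δ + mnorm (msym P)) ^ ((p - 2) / 2) • msym P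

/-! ### Auxiliary infrastructure -/

section Aux

set_option linter.unusedVariables false

/-- The entry-evaluation continuous linear map. -/
def entryCLM (i j : Fin 3) : Mat3 →L[ℝ] ℝ :=
  LinearMap.toContinuousLinearMap
    { toFun := fun M => M i j, map_add' := fun _ _ => rfl, map_smul' := fun _ _ => rfl }

/-- `msym` as a continuous linear map. -/
def msymCLM : Mat3 →L[ℝ] Mat3 :=
  LinearMap.toContinuousLinearMap
    { toFun := msym,
      map_add' := fun X Y => by simp [msym, Matrix.transpose_add]; module,
      map_smul' := fun c X => by simp [msym, Matrix.transpose_smul]; module }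

lemma msymCLM_apply (M : Mat3) : msymCLM M = msym M := rfl

lemma msym_eq_self {B : Mat3} (hB : Bᵀ = B) : msym B = B := by
  rw [msym, hB, ← two_smul ℝ B, smul_smul]
  norm_num

lemma mdot_self_nonneg (A : Mat3) : 0 ≤ mdot A A :=
  Finset.sum_nonneg fun i _ => Finset.sum_nonneg fun j _ => mul_self_nonneg _

lemma mdot_self_pos {A : Mat3} (hA : A ≠ 0) : 0 < mdot A A := by
  rcases (mdot_self_nonneg A).lt_or_eq with h | h
  · exact h
  · exfalso
    apply hA
    have hz := (Finset.sum_eq_zero_iff_of_nonneg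
      (fun i _ => Finset.sum_nonneg fun j _ => mul_self_nonneg (A i j))).mp h.symm
    ext i j
    have hzi := (Finset.sum_eq_zero_iff_of_nonneg
      (fun j _ => mul_self_nonneg (A i j))).mp (hz i (Finset.mem_univ i)) j (Finset.mem_univ j)
    have : A i j = 0 := by nlinarith [hzi]
    simpa using this

lemma mnorm_sq (A : Mat3) : mnorm A ^ 2 = mdot A A :=
  Real.sq_sqrt (mdot_self_nonneg A)

lemma mnorm_nonneg (A : Mat3) : 0 ≤ mnorm A := Real.sqrt_nonneg _

lemma cauchy_schwarz_mdot (A B : Mat3) : (mdot A B)^2 ≤ mdot A A * mdot B B := by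
  have hr : ∀ X Y : Mat3, mdot X Y = ∑ x : Fin 3 × Fin 3, X x.1 x.2 * Y x.1 x.2 := by
    intro X Y; rw [mdot, Fintype.sum_prod_type]
  simp only [hr]
  have h := Finset.sum_mul_sq_le_sq_mul_sq Finset.univ (fun x : Fin 3 × Fin 3 => A x.1 x.2)
    (fun x => B x.1 x.2)
  simpa [sq] using h

lemma mdot_comb (a b : ℝ) (X Y : Mat3) :
    mdot (a • X + b • Y) (a • X + b • Y) =
      a^2 * mdot X X + 2*a*b * mdot X Y + b^2 * mdot Y Y := by
  simp only [mdot, Matrix.add_apply, Matrix.smul_apply, smul_eq_mul, Finset.mul_sum]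
  rw [← Finset.sum_add_distrib, ← Finset.sum_add_distrib]
  refine Finset.sum_congr rfl fun i _ => ?_
  rw [← Finset.sum_add_distrib, ← Finset.sum_add_distrib]
  exact Finset.sum_congr rfl fun j _ => by ring

lemma msym_zero : msym 0 = 0 := by simp [msym]

lemma mnorm_zero : mnorm 0 = 0 := by simp [mnorm, mdot]

lemma continuous_mdot_self : Continuous fun M : Mat3 => mdot M M := by
  have h : ∀ (i j : Fin 3), Continuous fun M : Mat3 => M i j := fun i j => (entryCLM i j).continuous
  exact continuous_finset_sum _ fun i _ => continuous_finset_sum _ fun j _ =>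
    ((h i j).mul (h i j))

lemma continuous_mnorm : Continuous mnorm :=
  Real.continuous_sqrt.comp continuous_mdot_self

/-- The derivative of `M ↦ mdot M M`. -/
def DACLM (A : Mat3) : Mat3 →L[ℝ] ℝ := ∑ x : Fin 3 × Fin 3, (2 * A x.1 x.2) • entryCLM x.1 x.2

lemma hasFDerivAt_mdot_self (A : Mat3) :
    HasFDerivAt (fun M : Mat3 => mdot M M) (DACLM A) A := by
  have h : ∀ x : Fin 3 × Fin 3, x ∈ Finset.univ →
      HasFDerivAt (fun M : Mat3 => M x.1 x.2 * M x.1 x.2)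
      ((2 * A x.1 x.2) • entryCLM x.1 x.2) A := by
    intro x _
    have he : HasFDerivAt (fun M : Mat3 => M x.1 x.2) (entryCLM x.1 x.2) A :=
      (entryCLM x.1 x.2).hasFDerivAt
    have := he.mul he
    rw [two_mul, add_smul]
    exact this
  have hs := HasFDerivAt.sum h
  have h2 : (fun M : Mat3 => mdot M M) = fun M => ∑ x : Fin 3 × Fin 3, M x.1 x.2 * M x.1 x.2 := by
    funext M; rw [mdot, Fintype.sum_prod_type]
  rw [h2]
  exact hs

lemma DACLM_apply (A B : Mat3) : DACLM A B = 2 * mdot A B := by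
  rw [DACLM, ContinuousLinearMap.sum_apply]
  simp only [ContinuousLinearMap.smul_apply, smul_eq_mul]
  rw [mdot, Fintype.sum_prod_type, Finset.mul_sum]
  exact Finset.sum_congr rfl fun i _ => by
    rw [Finset.mul_sum]
    exact Finset.sum_congr rfl fun j _ => by show 2 * A i j * B i j = _; ring

/-- Derivative of `Fassoc` at a symmetric nonzero point. -/
lemma hasFDerivAt_Fassoc (p δ : ℝ) (A : Mat3) (hA : Aᵀ = A) (hA0 : mdot A A ≠ 0)
    (hd : 0 < δ + mnorm A) :
    HasFDerivAt (Fassoc p δ)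
      ((((δ + mnorm A) ^ ((p-2)/2)) • (ContinuousLinearMap.id ℝ Mat3) +
        ((((p-2)/2 * (δ + mnorm A) ^ ((p-2)/2 - 1)) * (1 / (2 * mnorm A))) • DACLM A).smulRight A).comp
        msymCLM) A := by
  have hQ := hasFDerivAt_mdot_self A
  have h1 : HasDerivAt (fun y : ℝ => δ + Real.sqrt y) (1 / (2 * Real.sqrt (mdot A A))) (mdot A A) :=
    (Real.hasDerivAt_sqrt hA0).const_add δ
  have h2 : HasDerivAt (fun y : ℝ => y ^ ((p-2)/2))
      (((p-2)/2) * (δ + mnorm A) ^ ((p-2)/2 - 1)) (δ + mnorm A) :=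
    Real.hasDerivAt_rpow_const (Or.inl hd.ne')
  have h3 : HasDerivAt (fun y : ℝ => (δ + Real.sqrt y) ^ ((p-2)/2))
      (((p-2)/2 * (δ + mnorm A) ^ ((p-2)/2 - 1)) * (1 / (2 * Real.sqrt (mdot A A)))) (mdot A A) :=
    by
      have h2' : HasDerivAt (fun y : ℝ => y ^ ((p-2)/2))
          (((p-2)/2) * (δ + mnorm A) ^ ((p-2)/2 - 1)) (δ + Real.sqrt (mdot A A)) := h2
      exact h2'.comp (mdot A A) h1
  have h4 : HasFDerivAt (fun M : Mat3 => (δ + mnorm M) ^ ((p-2)/2))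
      ((((p-2)/2 * (δ + mnorm A) ^ ((p-2)/2 - 1)) * (1 / (2 * mnorm A))) • DACLM A) A :=
    h3.comp_hasFDerivAt (f := fun M : Mat3 => mdot M M) A hQ
  have h5 := h4.smul (hasFDerivAt_id A)
  have h6 : HasFDerivAt msym msymCLM A := msymCLM.hasFDerivAt
  have hmA : msym A = A := msym_eq_self hA
  have h5' : HasFDerivAt (fun M : Mat3 => (δ + mnorm M) ^ ((p-2)/2) • id M)
      ((δ + mnorm A) ^ ((p-2)/2) • (ContinuousLinearMap.id ℝ Mat3) +
        ((((p-2)/2 * (δ + mnorm A) ^ ((p-2)/2 - 1)) * (1 / (2 * mnorm A))) • DACLM A).smulRight (id A))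
      (msym A) := by rw [hmA]; exact h5
  exact h5'.comp A h6

/-- Derivative of `Fassoc` at `0` when `δ > 0`. -/
lemma hasFDerivAt_Fassoc_zero (p δ : ℝ) (hδ : 0 < δ) :
    HasFDerivAt (Fassoc p δ) ((δ ^ ((p-2)/2)) • msymCLM) 0 := by
  refine hasFDerivAt_iff_isLittleO_nhds_zero.mpr ?_
  have hF0 : Fassoc p δ 0 = 0 := by simp [Fassoc, msym_zero]
  have heq : ∀ h : Mat3, Fassoc p δ (0 + h) - Fassoc p δ 0 - (δ ^ ((p-2)/2) • msymCLM) h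
      = ((δ + mnorm (msym h)) ^ ((p-2)/2) - δ ^ ((p-2)/2)) • msym h := by
    intro h
    rw [zero_add, hF0, sub_zero, Fassoc, sub_smul]
    simp [msymCLM_apply]
  rw [Asymptotics.isLittleO_iff]
  intro c hc
  set Kc := (2:ℝ) with hKc
  have hK0 : 0 < Kc := by positivity
  have hcont : ContinuousAt (fun h : Mat3 => (δ + mnorm (msym h)) ^ ((p-2)/2)) 0 := by
    apply ContinuousAt.rpow_const
    · exact (continuous_const.add (continuous_mnorm.comp msymCLM.continuous)).continuousAt
    · left
      simp [msym_zero, mnorm_zero]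
      exact hδ.ne'
  have htend : Filter.Tendsto (fun h : Mat3 => (δ + mnorm (msym h)) ^ ((p-2)/2) - δ ^ ((p-2)/2))
      (nhds 0) (nhds 0) := by
    have h0 := hcont.tendsto
    rw [show (δ + mnorm (msym (0:Mat3))) ^ ((p-2)/2) = δ ^ ((p-2)/2) by
      simp [msym_zero, mnorm_zero]] at h0
    simpa using h0.sub_const (δ ^ ((p-2)/2))
  have hev := Metric.tendsto_nhds.mp htend (c / Kc) (by positivity)
  filter_upwards [hev] with h hh
  refine (congrArg (fun X : Mat3 => ‖X‖) (heq h)).trans_le ?_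
  rw [norm_smul]
  have h1 : |((δ + mnorm (msym h)) ^ ((p-2)/2) - δ ^ ((p-2)/2))| ≤ c / Kc := by
    rw [Real.dist_eq, sub_zero] at hh
    exact le_of_lt hh
  have h2 : ‖msym h‖ ≤ Kc * ‖h‖ := by
    rw [msym, norm_smul, hKc]
    have hadd := norm_add_le h hᵀ
    have htr : ‖hᵀ‖ = ‖h‖ := Matrix.norm_transpose h
    have hn : ‖(1/2:ℝ)‖ = 1/2 := by norm_num
    rw [hn]
    nlinarith [norm_nonneg (h + hᵀ), norm_nonneg h]
  calc ‖((δ + mnorm (msym h)) ^ ((p-2)/2) - δ ^ ((p-2)/2))‖ * ‖msym h‖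
      ≤ (c / Kc) * (Kc * ‖h‖) := by
        apply mul_le_mul h1 h2 (norm_nonneg _) (by positivity)
    _ = c * ‖h‖ := by field_simp

/-! ### Scalar inequalities -/

lemma fac1 (p d t : ℝ) (hp : 1 < p) (ht : 0 ≤ t) (htd : t ≤ d) (hd : 0 < d) :
    min 1 (p-1) * d ≤ d + (p-2)*t ∧ d + (p-2)*t ≤ max 1 (p-1) * d := by
  rcases le_total p 2 with h | h
  · rw [min_eq_right (by linarith : p-1 ≤ 1), max_eq_left (by linarith : p-1 ≤ 1)]
    constructor <;> nlinarith
  · rw [min_eq_left (by linarith : (1:ℝ) ≤ p-1), max_eq_right (by linarith : (1:ℝ) ≤ p-1)]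
    constructor <;> nlinarith

lemma fac2 (p d t : ℝ) (hp : 1 < p) (ht : 0 ≤ t) (htd : t ≤ d) (hd : 0 < d) :
    min 1 (p^2/4) * (d*d) ≤ (d + (p-2)/2*t)^2 ∧ (d + (p-2)/2*t)^2 ≤ max 1 (p^2/4) * (d*d) := by
  rcases le_total p 2 with h | h
  · rw [min_eq_right (by nlinarith : p^2/4 ≤ 1), max_eq_left (by nlinarith : p^2/4 ≤ 1)]
    constructor
    · nlinarith [mul_nonneg (show (0:ℝ) ≤ (2-p)/2*(d-t) by nlinarith)
        (show (0:ℝ) ≤ d + (p-2)/2*t + p/2*d by nlinarith)]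
    · nlinarith [mul_nonneg (show (0:ℝ) ≤ (2-p)/2*t by nlinarith)
        (show (0:ℝ) ≤ 2*d + (p-2)/2*t by nlinarith)]
  · rw [min_eq_left (by nlinarith : (1:ℝ) ≤ p^2/4), max_eq_right (by nlinarith : (1:ℝ) ≤ p^2/4)]
    constructor
    · nlinarith [mul_nonneg (show (0:ℝ) ≤ (p-2)/2*t by nlinarith)
        (show (0:ℝ) ≤ 2*d + (p-2)/2*t by nlinarith)]
    · nlinarith [mul_nonneg (show (0:ℝ) ≤ (p-2)/2*(d-t) by nlinarith)
        (show (0:ℝ) ≤ d + (p-2)/2*t + p/2*d by nlinarith)]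

lemma key_scalar (p δ t b2 m : ℝ) (hp : 1 < p) (hδ : 0 ≤ δ) (ht : 0 ≤ t)
    (hd : 0 < δ + t) (hm0 : 0 ≤ m) (hmb : m ≤ b2) :
    min 1 (p^2/4) / max 1 (p-1) * (phi'' p δ t * b2) ≤
      (δ+t)^(p-2) * b2 + ((p-2)*(δ+t)^(p-3)*t + (p-2)^2/4*(δ+t)^(p-4)*t^2) * m
  ∧ (δ+t)^(p-2) * b2 + ((p-2)*(δ+t)^(p-3)*t + (p-2)^2/4*(δ+t)^(p-4)*t^2) * m ≤
      max 1 (p^2/4) / min 1 (p-1) * (phi'' p δ t * b2) := by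
  have hb2 : 0 ≤ b2 := le_trans hm0 hmb
  set d := δ + t with hdd
  have htd : t ≤ d := by simp [hdd]; linarith
  have hX : (0:ℝ) < d ^ (p-4) := Real.rpow_pos_of_pos hd _
  have e3 : d ^ (p-3) = d ^ (p-4) * d := by
    rw [show p-3 = (p-4)+1 by ring, Real.rpow_add hd, Real.rpow_one]
  have e2 : d ^ (p-2) = d ^ (p-4) * (d*d) := by
    rw [show p-2 = ((p-4)+1)+1 by ring, Real.rpow_add hd, Real.rpow_add hd, Real.rpow_one]
    ring
  have hphi : phi'' p δ t = d ^ (p-4) * (d * (d + (p-2)*t)) := by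
    rw [phi'', ← hdd, e2, e3]; ring
  obtain ⟨hf1, hf2⟩ := fac1 p d t hp ht htd hd
  obtain ⟨hg1, hg2⟩ := fac2 p d t hp ht htd hd
  set lo1 := min 1 (p-1) with hlo1d
  set hi1 := max 1 (p-1) with hhi1d
  set lo2 := min 1 (p^2/4) with hlo2d
  set hi2 := max 1 (p^2/4) with hhi2d
  clear_value lo1 hi1 lo2 hi2
  have hlo1 : 0 < lo1 := hlo1d ▸ lt_min one_pos (by linarith)
  have hhi1 : 0 < hi1 := hhi1d ▸ lt_of_lt_of_le one_pos (le_max_left _ _)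
  have hlo2 : 0 < lo2 := hlo2d ▸ lt_min one_pos (by positivity)
  have hhi2 : 0 < hi2 := hhi2d ▸ lt_of_lt_of_le one_pos (le_max_left _ _)
  have hlo1le : lo1 ≤ 1 := hlo1d ▸ min_le_left _ _
  have hhi1ge : 1 ≤ hi1 := hhi1d ▸ le_max_left _ _
  have hlo2le : lo2 ≤ 1 := hlo2d ▸ min_le_left _ _
  have hhi2ge : 1 ≤ hi2 := hhi2d ▸ le_max_left _ _
  rw [hphi, e2, e3]
  set X := d ^ (p-4) with hXd
  set K' := (p-2)*d*t + (p-2)^2/4*t^2 with hK'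
  clear_value K'
  have hEK : d*d + K' = (d + (p-2)/2*t)^2 := by rw [hK']; ring
  have hdd0 : (0:ℝ) < d*d := mul_pos hd hd
  clear_value d X
  have core_low : lo2/hi1 * ((d * (d + (p-2)*t)) * b2) ≤ d*d*b2 + K'*m := by
    have s1 : lo2/hi1 * ((d * (d + (p-2)*t)) * b2) ≤ lo2/hi1 * ((d * (hi1*d)) * b2) := by
      apply mul_le_mul_of_nonneg_left _ (by positivity)
      exact mul_le_mul_of_nonneg_right (mul_le_mul_of_nonneg_left hf2 hd.le) hb2
    have s2 : lo2/hi1 * ((d * (hi1*d)) * b2) = lo2 * (d*d) * b2 := by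
      field_simp
    rw [s2] at s1
    refine le_trans s1 ?_
    rcases le_or_gt 0 K' with hK | hK
    · have h1 : lo2 * (d*d) ≤ 1 * (d*d) := mul_le_mul_of_nonneg_right hlo2le hdd0.le
      have h2 : 0 ≤ K' * m := mul_nonneg hK hm0
      have h3 : lo2 * (d*d) * b2 ≤ 1 * (d*d) * b2 := mul_le_mul_of_nonneg_right h1 hb2
      linarith
    · have h1 : K' * b2 ≤ K' * m := mul_le_mul_of_nonpos_left hmb hK.le
      have h2 : lo2 * (d*d) * b2 ≤ (d + (p-2)/2*t)^2 * b2 :=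
        mul_le_mul_of_nonneg_right hg1 hb2
      have h3 : (d + (p-2)/2*t)^2 * b2 = d*d*b2 + K'*b2 := by rw [← hEK]; ring
      linarith
  have core_high : d*d*b2 + K'*m ≤ hi2/lo1 * ((d * (d + (p-2)*t)) * b2) := by
    have s1 : hi2/lo1 * ((d * (lo1*d)) * b2) ≤ hi2/lo1 * ((d * (d + (p-2)*t)) * b2) := by
      apply mul_le_mul_of_nonneg_left _ (by positivity)
      exact mul_le_mul_of_nonneg_right (mul_le_mul_of_nonneg_left hf1 hd.le) hb2
    have s2 : hi2/lo1 * ((d * (lo1*d)) * b2) = hi2 * (d*d) * b2 := by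
      field_simp
    rw [s2] at s1
    refine le_trans ?_ s1
    rcases le_or_gt K' 0 with hK | hK
    · have h1 : 1 * (d*d) ≤ hi2 * (d*d) := mul_le_mul_of_nonneg_right hhi2ge hdd0.le
      have h2 : K' * m ≤ 0 := mul_nonpos_of_nonpos_of_nonneg hK hm0
      have h3 : 1 * (d*d) * b2 ≤ hi2 * (d*d) * b2 := mul_le_mul_of_nonneg_right h1 hb2
      linarith
    · have h1 : K' * m ≤ K' * b2 := mul_le_mul_of_nonneg_left hmb hK.le
      have h2 : (d + (p-2)/2*t)^2 * b2 ≤ hi2 * (d*d) * b2 :=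
        mul_le_mul_of_nonneg_right hg2 hb2
      have h3 : (d + (p-2)/2*t)^2 * b2 = d*d*b2 + K'*b2 := by rw [← hEK]; ring
      linarith
  constructor
  · calc lo2/hi1 * (X * (d * (d + (p-2)*t)) * b2)
        = X * (lo2/hi1 * ((d * (d + (p-2)*t)) * b2)) := by ring
      _ ≤ X * (d*d*b2 + K'*m) := mul_le_mul_of_nonneg_left core_low hX.le
      _ = X * (d*d) * b2 + ((p-2)*(X*d)*t + (p-2)^2/4*X*t^2) * m := by rw [hK']; ring
  · calc X * (d*d) * b2 + ((p-2)*(X*d)*t + (p-2)^2/4*X*t^2) * m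
        = X * (d*d*b2 + K'*m) := by rw [hK']; ring
      _ ≤ X * (hi2/lo1 * ((d * (d + (p-2)*t)) * b2)) := mul_le_mul_of_nonneg_left core_high hX.le
      _ = hi2/lo1 * (X * (d * (d + (p-2)*t)) * b2) := by ring

end Aux

/-- Equivalence `|DF(A)[B]|² ∼ φ''(|A|)·|B|²` for symmetric `A, B`, with constants
depending only on `p` (uniformly in `δ ≥ 0`, provided `(δ, |A|) ≠ (0,0)`). Here
`DF(A)[B] = (fderiv ℝ F A) B` is the directional derivative of `F` at `A` in
direction `B`. -/
theorem gradient_F_equivalence (p : ℝ) (hp : 1 < p) :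
    ∃ c C : ℝ, 0 < c ∧ 0 < C ∧ ∀ δ : ℝ, 0 ≤ δ →
      ∀ A : Mat3, Aᵀ = A → ¬(δ = 0 ∧ A = 0) →
        ∀ B : Mat3, Bᵀ = B →
          c * (phi'' p δ (mnorm A) * (mnorm B) ^ 2) ≤
              (mnorm (fderiv ℝ (Fassoc p δ) A B)) ^ 2 ∧
          (mnorm (fderiv ℝ (Fassoc p δ) A B)) ^ 2 ≤
              C * (phi'' p δ (mnorm A) * (mnorm B) ^ 2) := by
  have hlo1 : (0:ℝ) < min 1 (p-1) := lt_min one_pos (by linarith)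
  have hhi1 : (0:ℝ) < max 1 (p-1) := lt_of_lt_of_le one_pos (le_max_left _ _)
  have hlo2 : (0:ℝ) < min 1 (p^2/4) := lt_min one_pos (by positivity)
  have hhi2 : (0:ℝ) < max 1 (p^2/4) := lt_of_lt_of_le one_pos (le_max_left _ _)
  refine ⟨min 1 (p^2/4) / max 1 (p-1), max 1 (p^2/4) / min 1 (p-1),
    by positivity, by positivity, ?_⟩
  intro δ hδ A hA hδA B hB
  by_cases hA0 : A = 0
  · -- A = 0, so δ > 0
    have hδ0 : 0 < δ := by
      rcases lt_or_eq_of_le hδ with h | h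
      · exact h
      · exact absurd ⟨h.symm, hA0⟩ hδA
    subst hA0
    have hDF := (hasFDerivAt_Fassoc_zero p δ hδ0).fderiv
    rw [hDF]
    have happ : ((δ ^ ((p-2)/2)) • msymCLM) B = (δ ^ ((p-2)/2)) • B := by
      rw [ContinuousLinearMap.smul_apply, msymCLM_apply, msym_eq_self hB]
    rw [happ]
    have hsq : mnorm ((δ ^ ((p-2)/2)) • B) ^ 2 = δ^(p-2) * mnorm B ^ 2 := by
      rw [mnorm_sq]
      have := mdot_comb (δ ^ ((p-2)/2)) 0 B B
      simp only [zero_smul, add_zero, mul_zero, zero_mul] at this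
      rw [this, mnorm_sq]
      have hpow : (δ ^ ((p-2)/2))^2 = δ^(p-2) := by
        rw [← Real.rpow_natCast (δ ^ ((p-2)/2)) 2, ← Real.rpow_mul hδ]
        norm_num
      rw [hpow]
      ring
    rw [hsq]
    have hphi0 : phi'' p δ (mnorm (0:Mat3)) = δ^(p-2) := by
      rw [mnorm_zero, phi'']
      simp
    rw [hphi0]
    have hpos : 0 ≤ δ^(p-2) * mnorm B ^ 2 := by positivity
    have hc1 : min 1 (p^2/4) / max 1 (p-1) ≤ 1 := by
      rw [div_le_one hhi1]
      exact le_trans (min_le_left _ _) (le_max_left _ _)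
    have hC1 : (1:ℝ) ≤ max 1 (p^2/4) / min 1 (p-1) := by
      rw [le_div_iff₀ hlo1, one_mul]
      exact le_trans (min_le_left _ _) (le_max_left _ _)
    constructor
    · nlinarith
    · nlinarith
  · -- A ≠ 0
    have hAA : 0 < mdot A A := mdot_self_pos hA0
    set t := mnorm A with htdef
    have ht : 0 < t := Real.sqrt_pos.2 hAA
    have hd : 0 < δ + t := by linarith
    set d := δ + t with hddef
    have ht2 : mdot A A = t^2 := (mnorm_sq A).symm
    have hDF := (hasFDerivAt_Fassoc p δ A hA hAA.ne' hd).fderiv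
    set c₀ := mdot A B with hc₀
    set b2 := mdot B B with hb2def
    have hb2 : 0 ≤ b2 := mdot_self_nonneg B
    -- the directional derivative
    set α := (p-2)/2 * d ^ ((p-2)/2 - 1) * (1/(2*t)) * (2*c₀) with hαdef
    set β := d ^ ((p-2)/2) with hβdef
    have happ : fderiv ℝ (Fassoc p δ) A B = α • A + β • B := by
      rw [hDF]
      rw [ContinuousLinearMap.comp_apply, ContinuousLinearMap.add_apply,
        ContinuousLinearMap.smul_apply, ContinuousLinearMap.id_apply,
        ContinuousLinearMap.smulRight_apply, ContinuousLinearMap.smul_apply,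
        msymCLM_apply, msym_eq_self hB, DACLM_apply]
      rw [hαdef, hβdef, hc₀, hddef, htdef]
      simp only [smul_eq_mul]
      rw [add_comm]
    -- quantities for key_scalar
    set m := c₀^2 / t^2 with hmdef
    have hm0 : 0 ≤ m := by positivity
    have hmb : m ≤ b2 := by
      rw [hmdef, div_le_iff₀ (by positivity)]
      have := cauchy_schwarz_mdot A B
      rw [ht2] at this
      rw [hc₀, hb2def]
      nlinarith [this]
    -- rpow identities
    have hu4 : d ^ ((p-2)/2 - 1) = d ^ ((p-4)/2) := by
      rw [show (p-2)/2 - 1 = (p-4)/2 by ring]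
    have huu : d ^ ((p-4)/2) * d ^ ((p-4)/2) = d ^ (p-4) := by
      rw [← Real.rpow_add hd]; congr 1; ring
    have huv : d ^ ((p-4)/2) * d ^ ((p-2)/2) = d ^ (p-3) := by
      rw [← Real.rpow_add hd]; congr 1; ring
    have hvv : d ^ ((p-2)/2) * d ^ ((p-2)/2) = d ^ (p-2) := by
      rw [← Real.rpow_add hd]; congr 1; ring
    -- compute the squared norm
    have hN : mnorm (fderiv ℝ (Fassoc p δ) A B) ^ 2 =
        d^(p-2) * b2 + ((p-2)*d^(p-3)*t + (p-2)^2/4*d^(p-4)*t^2) * m := by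
      rw [happ, mnorm_sq, mdot_comb, ht2, ← hc₀, ← hb2def]
      rw [hαdef, hβdef, hu4, hmdef]
      rw [← huu, ← huv, ← hvv]
      field_simp [ht.ne']
      ring
    have hkey := key_scalar p δ t b2 m hp hδ ht.le hd hm0 hmb
    rw [← hddef] at hkey
    have hmb2 : mnorm B ^ 2 = b2 := by rw [mnorm_sq, hb2def]
    rw [hN, hmb2]
    exact hkey
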